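/- Let G = ∏_p ℤ_p^×, the product over all primes p of the unit groups of the p-adic integers, with the product topology. Let H = { x ∈ G : x_p is a square in ℤ_p^× for every odd prime p } ∪ { x ∈ G : x_p is not a square in ℤ_p^× for every odd prime p }. Then H is a closed subgroup of G whose projection to ℤ_p^× is surjective for every prime p, but H is not open in G. -/

import Mathlib

instance (p : Nat.Primes) : Fact (p : ℕ).Prime := ⟨p.2⟩

section Aux

variable {p : ℕ} [Fact p.Prime]

/-- A unit of `ℤ_p` (`p` odd) is a square iff its image in `ZMod p` is a square. -/
theorem padic_isSquare_iff (hp : p ≠ 2) (u : ℤ_[p]ˣ) :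
    IsSquare u ↔ IsSquare (PadicInt.toZMod (u : ℤ_[p])) := by
  constructor
  · rintro ⟨v, rfl⟩
    exact ⟨PadicInt.toZMod (v : ℤ_[p]), by rw [Units.val_mul, map_mul]⟩
  · rintro ⟨b, hb⟩
    have hu1 : ‖(u : ℤ_[p])‖ = 1 := PadicInt.norm_units u
    have hune : PadicInt.toZMod (u : ℤ_[p]) ≠ 0 := by
      intro h0
      have : IsUnit (PadicInt.toZMod (u : ℤ_[p])) := (u.isUnit.map PadicInt.toZMod)
      rw [h0] at this
      exact this.ne_zero rfl
    have hbne : b ≠ 0 := by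
      rintro rfl; simp at hb; exact hune hb
    set a : ℤ_[p] := ((b.val : ℕ) : ℤ_[p]) with ha
    have hta : PadicInt.toZMod a = b := by
      rw [ha, map_natCast, ZMod.natCast_val, ZMod.cast_id]
    have hanorm : ‖a‖ = 1 := by
      rcases lt_or_eq_of_le (PadicInt.norm_le_one a) with h | h
      · exfalso
        have : a ∈ RingHom.ker (PadicInt.toZMod (p := p)) := by
          rw [PadicInt.ker_toZMod, PadicInt.maximalIdeal_eq_span_p, Ideal.mem_span_singleton,
            ← PadicInt.norm_lt_one_iff_dvd]
          exact h
        rw [RingHom.mem_ker, hta] at this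
        exact hbne this
      · exact h
    have h2 : ‖(2 : ℤ_[p])‖ = 1 := by
      rcases lt_or_eq_of_le (PadicInt.norm_le_one (2 : ℤ_[p])) with h | h
      · exfalso
        have h' : ‖((2 : ℤ) : ℤ_[p])‖ < 1 := by norm_num at h ⊢; exact h
        have := (PadicInt.norm_int_lt_one_iff_dvd 2).mp h'
        have hp2 : p ∣ 2 := by exact_mod_cast this
        exact hp ((Nat.prime_dvd_prime_iff_eq Fact.out Nat.prime_two).mp hp2)
      · exact h
    -- Hensel's lemma with F = X^2 - u at approximation a
    set F : Polynomial ℤ_[p] := Polynomial.X ^ 2 - Polynomial.C (u : ℤ_[p]) with hF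
    have hevala : F.eval a = a ^ 2 - (u : ℤ_[p]) := by simp [hF]
    have hderiv : F.derivative.eval a = 2 * a := by
      simp [hF, Polynomial.derivative_pow]
    have hkey : ‖F.eval a‖ < ‖F.derivative.eval a‖ ^ 2 := by
      rw [hevala, hderiv, norm_mul, h2, hanorm]
      norm_num
      have : a ^ 2 - (u : ℤ_[p]) ∈ RingHom.ker (PadicInt.toZMod (p := p)) := by
        rw [RingHom.mem_ker, map_sub, map_pow, hta, hb]; ring
      rw [PadicInt.ker_toZMod, PadicInt.maximalIdeal_eq_span_p, Ideal.mem_span_singleton,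
        ← PadicInt.norm_lt_one_iff_dvd] at this
      exact this
    obtain ⟨z, hz, -⟩ := hensels_lemma hkey
    rw [hF] at hz
    simp only [Polynomial.coe_aeval_eq_eval, Polynomial.eval_sub, Polynomial.eval_pow, Polynomial.eval_X,
      Polynomial.eval_C, sub_eq_zero] at hz
    have hznorm : ‖z‖ = 1 := by
      have : ‖z‖ ^ 2 = 1 := by rw [← norm_pow, hz, hu1]
      nlinarith [norm_nonneg z, PadicInt.norm_le_one z]
    have hzu : IsUnit z := PadicInt.isUnit_iff.mpr hznorm
    refine ⟨hzu.unit, Units.ext ?_⟩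
    simp [← hz]; ring

theorem padic_toZMod_ne_zero (u : ℤ_[p]ˣ) : PadicInt.toZMod (u : ℤ_[p]) ≠ 0 := by
  intro h0
  have : IsUnit (PadicInt.toZMod (u : ℤ_[p])) := (u.isUnit.map PadicInt.toZMod)
  rw [h0] at this
  exact this.ne_zero rfl

/-- There is a nonsquare unit in `ℤ_p` for odd `p`. -/
theorem padic_exists_nonsquare (hp : p ≠ 2) : ∃ v : ℤ_[p]ˣ, ¬ IsSquare v := by
  obtain ⟨b, hb⟩ := FiniteField.exists_nonsquare (F := ZMod p)
    (by rw [ZMod.ringChar_zmod_n]; exact hp)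
  have hbne : b ≠ 0 := by rintro rfl; exact hb ⟨0, by ring⟩
  set a : ℤ_[p] := ((b.val : ℕ) : ℤ_[p]) with ha
  have hta : PadicInt.toZMod a = b := by
    rw [ha, map_natCast, ZMod.natCast_val, ZMod.cast_id]
  have hanorm : ‖a‖ = 1 := by
    rcases lt_or_eq_of_le (PadicInt.norm_le_one a) with h | h
    · exfalso
      have : a ∈ RingHom.ker (PadicInt.toZMod (p := p)) := by
        rw [PadicInt.ker_toZMod, PadicInt.maximalIdeal_eq_span_p, Ideal.mem_span_singleton,
          ← PadicInt.norm_lt_one_iff_dvd]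
        exact h
      rw [RingHom.mem_ker, hta] at this
      exact hbne this
    · exact h
  have hau : IsUnit a := PadicInt.isUnit_iff.mpr hanorm
  refine ⟨hau.unit, fun hsq => hb ?_⟩
  rw [padic_isSquare_iff hp] at hsq
  rwa [IsUnit.unit_spec, hta] at hsq

/-- Nonsquare times nonsquare is a square in `ℤ_p^×` for odd `p`. -/
theorem padic_nonsquare_mul (hp : p ≠ 2) {u v : ℤ_[p]ˣ}
    (hu : ¬ IsSquare u) (hv : ¬ IsSquare v) : IsSquare (u * v) := by
  classical
  rw [padic_isSquare_iff hp] at hu hv ⊢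
  rw [Units.val_mul, map_mul]
  have hune := padic_toZMod_ne_zero u
  have hvne := padic_toZMod_ne_zero v
  have h1 : quadraticChar (ZMod p) (PadicInt.toZMod (u : ℤ_[p])) = -1 :=
    quadraticChar_neg_one_iff_not_isSquare.mpr hu
  have h2 : quadraticChar (ZMod p) (PadicInt.toZMod (v : ℤ_[p])) = -1 :=
    quadraticChar_neg_one_iff_not_isSquare.mpr hv
  have := (quadraticChar_one_iff_isSquare (mul_ne_zero hune hvne)).mp
  apply this
  rw [map_mul, h1, h2]; ring

/-- Being a square only depends on the residue: local constancy. -/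
theorem padic_isSquare_congr (hp : p ≠ 2) {u v : ℤ_[p]ˣ}
    (h : ‖((v : ℤ_[p]) - (u : ℤ_[p]))‖ < 1) : (IsSquare u ↔ IsSquare v) := by
  rw [padic_isSquare_iff hp, padic_isSquare_iff hp]
  have : PadicInt.toZMod ((v : ℤ_[p]) - (u : ℤ_[p])) = 0 := by
    have : ((v : ℤ_[p]) - (u : ℤ_[p])) ∈ RingHom.ker (PadicInt.toZMod (p := p)) := by
      rw [PadicInt.ker_toZMod, PadicInt.maximalIdeal_eq_span_p, Ideal.mem_span_singleton,
        ← PadicInt.norm_lt_one_iff_dvd]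
      exact h
    rwa [RingHom.mem_ker] at this
  rw [map_sub, sub_eq_zero] at this
  rw [this]

/-- The set of squares in `ℤ_p^×` is clopen for odd `p`. -/
theorem padic_isClopen_squares (hp : p ≠ 2) :
    IsClopen {u : ℤ_[p]ˣ | IsSquare u} := by
  constructor
  · rw [← isOpen_compl_iff]
    refine isOpen_iff_forall_mem_open.mpr fun u hu => ?_
    refine ⟨(Units.val : ℤ_[p]ˣ → ℤ_[p]) ⁻¹' Metric.ball (u : ℤ_[p]) 1, ?_, ?_, ?_⟩
    · intro v hv
      simp only [Set.mem_preimage, Metric.mem_ball, dist_eq_norm] at hv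
      intro hsq
      exact hu ((padic_isSquare_congr hp hv).mpr hsq)
    · exact (Metric.isOpen_ball).preimage Units.continuous_val
    · simp
  · refine isOpen_iff_forall_mem_open.mpr fun u hu => ?_
    refine ⟨(Units.val : ℤ_[p]ˣ → ℤ_[p]) ⁻¹' Metric.ball (u : ℤ_[p]) 1, ?_, ?_, ?_⟩
    · intro v hv
      simp only [Set.mem_preimage, Metric.mem_ball, dist_eq_norm] at hv
      exact (padic_isSquare_congr hp hv).mp hu
    · exact (Metric.isOpen_ball).preimage Units.continuous_val
    · simp

end Aux

/-- In `G = ∏_p ℤ_p^×`, the set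
`H = {x : x_p is a square for all odd p} ∪ {x : x_p is a nonsquare for all odd p}`
is a closed subgroup whose projection to every `ℤ_p^×` is surjective, but which is
not open in `G`. -/
theorem stmt14 :
    let G := ∀ p : Nat.Primes, ℤ_[(p : ℕ)]ˣ
    let H : Set G := {x | ∀ p : Nat.Primes, (p : ℕ) ≠ 2 → IsSquare (x p)} ∪
      {x | ∀ p : Nat.Primes, (p : ℕ) ≠ 2 → ¬ IsSquare (x p)}
    (∃ H' : Subgroup G, (H' : Set G) = H) ∧
    IsClosed H ∧
    (∀ p : Nat.Primes, (fun x : G => x p) '' H = Set.univ) ∧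
    ¬ IsOpen H := by
  classical
  intro G H
  refine ⟨?_, ?_, ?_, ?_⟩
  · -- subgroup
    refine ⟨{
      carrier := H
      one_mem' := Or.inl fun p _ => IsSquare.one
      mul_mem' := ?_
      inv_mem' := ?_ }, rfl⟩
    · rintro a b (ha | ha) (hb | hb)
      · exact Or.inl fun p hp => (ha p hp).mul (hb p hp)
      · refine Or.inr fun p hp hsq => hb p hp ?_
        have : (b p) = (a p)⁻¹ * (a p * b p) := by group
        rw [this]
        exact ((ha p hp).inv).mul hsq
      · refine Or.inr fun p hp hsq => ha p hp ?_
        have : (a p) = (a p * b p) * (b p)⁻¹ := by group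
        rw [this]
        exact hsq.mul ((hb p hp).inv)
      · exact Or.inl fun p hp => padic_nonsquare_mul hp (ha p hp) (hb p hp)
    · rintro a (ha | ha)
      · exact Or.inl fun p hp => ((ha p hp).inv)
      · refine Or.inr fun p hp hsq => ha p hp ?_
        rw [Pi.inv_apply] at hsq
        exact isSquare_inv.mp hsq
  · -- closed
    have hA : IsClosed {x : G | ∀ p : Nat.Primes, (p : ℕ) ≠ 2 → IsSquare (x p)} := by
      have he : {x : G | ∀ p : Nat.Primes, (p : ℕ) ≠ 2 → IsSquare (x p)} =
          ⋂ p : Nat.Primes, {x : G | (p : ℕ) ≠ 2 → IsSquare (x p)} := by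
        ext x; simp [Set.mem_iInter]
      rw [he]
      refine isClosed_iInter fun p => ?_
      by_cases hp : (p : ℕ) = 2
      · convert isClosed_univ
        ext x; simp [hp]
      · have he2 : {x : G | (p : ℕ) ≠ 2 → IsSquare (x p)} =
            (fun x : G => x p) ⁻¹' {u | IsSquare u} := by
          ext x; simp [hp]
        rw [he2]
        exact ((padic_isClopen_squares hp).isClosed).preimage (continuous_apply p)
    have hB : IsClosed {x : G | ∀ p : Nat.Primes, (p : ℕ) ≠ 2 → ¬ IsSquare (x p)} := by
      have he : {x : G | ∀ p : Nat.Primes, (p : ℕ) ≠ 2 → ¬ IsSquare (x p)} =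
          ⋂ p : Nat.Primes, {x : G | (p : ℕ) ≠ 2 → ¬ IsSquare (x p)} := by
        ext x; simp [Set.mem_iInter]
      rw [he]
      refine isClosed_iInter fun p => ?_
      by_cases hp : (p : ℕ) = 2
      · convert isClosed_univ
        ext x; simp [hp]
      · have he2 : {x : G | (p : ℕ) ≠ 2 → ¬ IsSquare (x p)} =
            (fun x : G => x p) ⁻¹' {u | IsSquare u}ᶜ := by
          ext x; simp [hp]
        rw [he2]
        exact (isClosed_compl_iff.mpr (padic_isClopen_squares hp).isOpen).preimage
          (continuous_apply p)
    exact hA.union hB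
  · -- projections surjective
    intro p
    ext u
    simp only [Set.mem_image, Set.mem_univ, iff_true]
    have hns : ∀ q : Nat.Primes, ∃ v : ℤ_[(q : ℕ)]ˣ, (q : ℕ) ≠ 2 → ¬ IsSquare v := by
      intro q
      by_cases h : (q : ℕ) = 2
      · exact ⟨1, fun h' => absurd h h'⟩
      · obtain ⟨v, hv⟩ := padic_exists_nonsquare h
        exact ⟨v, fun _ => hv⟩
    choose ns hns using hns
    by_cases hsq : (p : ℕ) = 2 ∨ IsSquare u
    · refine ⟨Function.update (fun q => 1) p u, Or.inl fun q hq => ?_, ?_⟩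
      · by_cases hqp : q = p
        · subst hqp
          rw [Function.update_self]
          rcases hsq with h | h
          · exact absurd h hq
          · exact h
        · rw [Function.update_of_ne hqp]
          exact IsSquare.one
      · simp
    · push_neg at hsq
      obtain ⟨hp2, hu⟩ := hsq
      refine ⟨Function.update ns p u, Or.inr fun q hq => ?_, ?_⟩
      · by_cases hqp : q = p
        · subst hqp
          rwa [Function.update_self]
        · rw [Function.update_of_ne hqp]
          exact hns q hq
      · simp
  · -- not open
    intro hO
    have h1 : (1 : G) ∈ H := Or.inl fun p _ => IsSquare.one
    obtain ⟨I, s, hs, hsub⟩ := isOpen_pi_iff.mp hO 1 h1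
    haveI : Infinite Nat.Primes := Nat.Primes.infinite
    set two : Nat.Primes := ⟨2, Nat.prime_two⟩ with htwo
    obtain ⟨q1, hq1⟩ := Infinite.exists_notMem_finset (insert two I)
    obtain ⟨q2, hq2⟩ := Infinite.exists_notMem_finset (insert q1 (insert two I))
    simp only [Finset.mem_insert, not_or] at hq1 hq2
    have hq1odd : (q1 : ℕ) ≠ 2 := fun h => hq1.1 (Subtype.ext h)
    have hq2odd : (q2 : ℕ) ≠ 2 := fun h => hq2.2.1 (Subtype.ext h)
    obtain ⟨v1, hv1⟩ := padic_exists_nonsquare hq1odd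
    set x : G := Function.update (fun q => 1) q1 v1 with hx
    have hxmem : x ∈ (I : Set Nat.Primes).pi s := by
      intro i hi
      have hi' : i ∈ I := hi
      have : i ≠ q1 := fun h => hq1.2 (h ▸ hi')
      rw [hx, Function.update_of_ne this]
      exact (hs i hi').2
    have hxH : x ∈ H := hsub hxmem
    rcases hxH with h | h
    · have := h q1 hq1odd
      rw [hx, Function.update_self] at this
      exact hv1 this
    · have := h q2 hq2odd
      have hne : q2 ≠ q1 := hq2.1
      rw [hx, Function.update_of_ne hne] at this
      exact this IsSquare.one
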